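/- Let d ≥ 2 be an integer, ρ₀ > 0, and let ρ : [0,∞) → (0,∞) be differentiable with ρ(0) = ρ₀ and ρ'(t) = (d−1)·coth(ρ(t)/2) for all t ≥ 0. Then ρ(t) = 2·arccosh(e^{(d−1)t/2}·cosh(ρ₀/2)) for all t ≥ 0. -/

import Mathlib

open Real

/-- The inverse hyperbolic cosine: `arccosh x = log (x + √(x² − 1))` for `x ≥ 1`. -/
noncomputable def arccosh (x : ℝ) : ℝ := Real.log (x + Real.sqrt (x ^ 2 - 1))

/-- The hyperbolic cotangent: `coth x = cosh x / sinh x`. -/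
noncomputable def coth (x : ℝ) : ℝ := Real.cosh x / Real.sinh x

lemma arccosh_cosh_of_nonneg {x : ℝ} (hx : 0 ≤ x) : arccosh (Real.cosh x) = x := by
  unfold arccosh
  have h1 : Real.cosh x ^ 2 - 1 = Real.sinh x ^ 2 := by
    nlinarith [Real.cosh_sq_sub_sinh_sq x]
  rw [h1, Real.sqrt_sq (Real.sinh_nonneg_iff.mpr hx), Real.cosh_add_sinh, Real.log_exp]

theorem stmt_18 (d : ℕ) (hd : 2 ≤ d) (ρ₀ : ℝ) (hρ₀ : 0 < ρ₀)
    (ρ : ℝ → ℝ) (h0 : ρ 0 = ρ₀)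
    (hmem : ∀ t : ℝ, 0 ≤ t → 0 < ρ t)
    (hderiv : ∀ t : ℝ, 0 ≤ t →
      HasDerivWithinAt ρ (((d : ℝ) - 1) * coth (ρ t / 2)) (Set.Ici 0) t) :
    ∀ t : ℝ, 0 ≤ t →
      ρ t = 2 * arccosh (Real.exp (((d : ℝ) - 1) * t / 2) * Real.cosh (ρ₀ / 2)) := by
  intro t ht
  set c : ℝ := ((d : ℝ) - 1) / 2 with hc
  set h : ℝ → ℝ := fun s => Real.exp (-(c * s)) * Real.cosh (ρ s / 2) with hh
  have hder : ∀ x, 0 ≤ x → HasDerivWithinAt h 0 (Set.Ici x) x := by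
    intro x hx0
    have hρx : 0 < ρ x := hmem x hx0
    have hsinh : Real.sinh (ρ x / 2) ≠ 0 :=
      ne_of_gt (Real.sinh_pos_iff.mpr (by linarith))
    have hρ' : HasDerivWithinAt ρ (((d : ℝ) - 1) * coth (ρ x / 2)) (Set.Ici x) x :=
      (hderiv x hx0).mono (Set.Ici_subset_Ici.mpr hx0)
    have h1 : HasDerivWithinAt (fun s => Real.exp (-(c * s)))
        (Real.exp (-(c * x)) * (-c)) (Set.Ici x) x := by
      simpa using (((hasDerivAt_id x).const_mul c).neg.exp).hasDerivWithinAt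
    have h2 : HasDerivWithinAt (fun s => Real.cosh (ρ s / 2))
        (Real.sinh (ρ x / 2) * ((((d : ℝ) - 1) * coth (ρ x / 2)) / 2))
        (Set.Ici x) x := by
      simpa [mul_comm] using (hρ'.div_const 2).cosh
    have h3 := h1.mul h2
    refine (h3.congr_deriv ?_ : HasDerivWithinAt h 0 (Set.Ici x) x)
    rw [coth]
    field_simp
    ring
  have hρcont : ContinuousOn ρ (Set.Ici 0) :=
    fun x hx => (hderiv x hx).continuousWithinAt
  have hcont : ContinuousOn h (Set.Icc 0 t) := by
    have : ContinuousOn h (Set.Ici 0) := by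
      apply ContinuousOn.mul
      · exact (Real.continuous_exp.comp (continuous_const.mul continuous_id).neg).continuousOn
      · exact Real.continuous_cosh.comp_continuousOn (hρcont.div_const 2)
    exact this.mono (fun y hy => hy.1)
  have hconst := constant_of_has_deriv_right_zero hcont
    (fun x hx => hder x hx.1) t (Set.mem_Icc.mpr ⟨ht, le_rfl⟩)
  have h0' : h 0 = Real.cosh (ρ₀ / 2) := by simp [hh, h0]
  have hcosh : Real.cosh (ρ t / 2) = Real.exp (c * t) * Real.cosh (ρ₀ / 2) := by
    have := hconst
    rw [h0'] at this
    simp only [hh] at this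
    have hexp : Real.exp (-(c * t)) ≠ 0 := Real.exp_ne_zero _
    field_simp [Real.exp_neg] at this ⊢
    have e : Real.exp (-(c*t)) * Real.exp (c*t) = 1 := by rw [← Real.exp_add]; simp
    linear_combination (Real.exp (c*t)) * this - Real.cosh (ρ t / 2) * e
  have hρt : 0 ≤ ρ t / 2 := by linarith [hmem t ht]
  have : arccosh (Real.cosh (ρ t / 2)) = ρ t / 2 := arccosh_cosh_of_nonneg hρt
  rw [hcosh] at this
  have hct : c * t = ((d : ℝ) - 1) * t / 2 := by rw [hc]; ring
  rw [hct] at this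
  linarith [this]
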